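/- Let G be a finite group and suppose a group A acts on the set Irr(G) of irreducible complex characters of G and on the set of conjugacy classes of G in such a way that (a•χ)(y) = χ(x) whenever a ∈ A, χ ∈ Irr(G), x lies in a conjugacy class K, and y lies in the class a•K. Then (i) for every a ∈ A, the number of irreducible characters fixed by a equals the number of conjugacy classes fixed by a; and (ii) the number of A-orbits on Irr(G) equals the number of A-orbits on the set of conjugacy classes of G. -/

import Mathlib

/-- `χ` is the character of some irreducible finite-dimensional complex representation
of the group `G`. -/
def IsIrredChar (G : Type) [Monoid G] (χ : G → ℂ) : Prop :=
  ∃ V : FDRep ℂ G, CategoryTheory.Simple V ∧ χ = FDRep.character V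

namespace BrauerPerm

open CategoryTheory
open scoped Classical
noncomputable section

set_option linter.unusedSectionVars false
set_option maxHeartbeats 1000000

variable {G : Type} [Group G] [Fintype G]

theorem char_classfun (χ : {χ : G → ℂ // IsIrredChar G χ}) (g h : G) :
    χ.1 (h * g * h⁻¹) = χ.1 g := by
  obtain ⟨χ, V, hV, rfl⟩ := χ
  simp

theorem char_orth (χ ψ : {χ : G → ℂ // IsIrredChar G χ}) :
    ∑ g : G, χ.1 g * ψ.1 g⁻¹ = if χ = ψ then (Fintype.card G : ℂ) else 0 := by
  letI : Fintype G := ‹Fintype G›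
  haveI : Invertible (Fintype.card G : ℂ) :=
    invertibleOfNonzero (Nat.cast_ne_zero.mpr Fintype.card_ne_zero)
  have key' : ∀ (V W : FDRep ℂ G), Simple V → Simple W →
      ∑ g : G, V.character g * W.character g⁻¹ =
        if Nonempty (V ≅ W) then (Fintype.card G : ℂ) else 0 := by
    intro V W hV hW
    haveI := hV; haveI := hW
    have key := FDRep.char_orthonormal (k := ℂ) (G := G) V W
    calc ∑ g : G, V.character g * W.character g⁻¹
        = (Fintype.card G : ℂ) •
            (⅟(Fintype.card G : ℂ) • ∑ g : G, V.character g * W.character g⁻¹) := by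
          rw [smul_smul, mul_invOf_self, one_smul]
      _ = _ := by
          rw [show (⅟(Fintype.card G : ℂ) • ∑ g : G, V.character g * W.character g⁻¹) =
            (if Nonempty (V ≅ W) then (1:ℂ) else 0) from by
              simpa [invOf_eq_inv, Nat.card_eq_fintype_card] using key]
          split <;> simp
  simp only [Subtype.ext_iff]
  obtain ⟨f1, V, hV, hχ⟩ := χ
  obtain ⟨f2, W, hW, hψ⟩ := ψ
  dsimp only
  by_cases h : f1 = f2
  · rw [if_pos h, hχ, ← h, hχ]
    rw [key' V V hV hV, if_pos ⟨Iso.refl V⟩]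
  · rw [if_neg h]
    rw [hχ, hψ, key' V W hV hW, if_neg]
    intro ⟨i⟩
    exact h (hχ.trans ((FDRep.char_iso i).trans hψ.symm))

def rhoRes {V : Type} [AddCommGroup V] [Module ℂ V] (ρ : Representation ℂ G V)
    (N : Submodule ℂ V) (hN : ∀ g x, x ∈ N → ρ g x ∈ N) : Representation ℂ G ↥N where
  toFun g := (ρ g).restrict (fun x hx => hN g x hx)
  map_one' := by ext x; simp
  map_mul' := by intro g h; ext x; simp

set_option maxHeartbeats 1000000 in
theorem simple_of_invariant {V : Type} [AddCommGroup V] [Module ℂ V] [FiniteDimensional ℂ V]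
    [Nontrivial V] (ρ : Representation ℂ G V)
    (hsimp : ∀ N : Submodule ℂ V, (∀ g x, x ∈ N → ρ g x ∈ N) → N = ⊥ ∨ N = ⊤) :
    Simple (FDRep.of ρ) := by
  constructor
  intro Y f hf
  constructor
  · intro hiso h0
    obtain ⟨x, y, hxy⟩ := exists_pair_ne V
    apply hxy
    have h2 : (inv f) ≫ f = 𝟙 (FDRep.of ρ) := by simp
    have : ∀ v : V, v = 0 := by
      intro v
      have := congrArg (fun (m : FDRep.of ρ ⟶ FDRep.of ρ) => m.hom v) h2
      simp only [h0] at this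
      simp at this
      exact this.symm.trans rfl
    rw [this x, this y]
  · intro hf0
    set l : ↥Y.V.obj →ₗ[ℂ] V := f.hom.hom.hom with hl
    have hcomm : ∀ (g : G) (y : Y.V.obj), l (Y.ρ g y) = ρ g (l y) := by
      intro g y
      have := congrArg (fun (m : _) => m y) (f.comm g)
      exact this
    haveI hfdY : FiniteDimensional ℂ ↥Y.V.obj := Y.V.2
    have hinj : Function.Injective l := by
      rw [← LinearMap.ker_eq_bot]
      by_contra hker
      have hKinv : ∀ g x, x ∈ LinearMap.ker l → Y.ρ g x ∈ LinearMap.ker l := by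
        intro g x hx
        simp only [LinearMap.mem_ker] at hx ⊢
        exact (hcomm g x).trans (by rw [hx, map_zero])
      let K : FDRep ℂ G := FDRep.of (rhoRes Y.ρ (LinearMap.ker l) hKinv)
      let ι : K ⟶ Y := ⟨ConcreteCategory.ofHom (LinearMap.ker l).subtype, by intro g; rfl⟩
      have hcomp : ι ≫ f = 0 := by
        ext x
        exact x.2
      have hι : ι = 0 := (Preadditive.mono_iff_cancel_zero f).mp hf K ι hcomp
      apply hker
      ext x
      simp only [Submodule.mem_bot, LinearMap.mem_ker]
      constructor
      · intro hx
        have := congrArg (fun (m : K ⟶ Y) => m.hom ⟨x, hx⟩) hι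
        exact this
      · intro hx; simp [hx]
    have hrinv : ∀ g x, x ∈ LinearMap.range l → ρ g x ∈ LinearMap.range l := by
      rintro g x ⟨y, rfl⟩
      exact ⟨Y.ρ g y, hcomm g y⟩
    have hsurj : Function.Surjective l := by
      rw [← LinearMap.range_eq_top]
      rcases hsimp (LinearMap.range l) hrinv with h | h
      · exfalso
        apply hf0
        ext y
        have : l y ∈ LinearMap.range l := ⟨y, rfl⟩
        rw [h] at this
        simpa using this
      · exact h
    let e := LinearEquiv.ofBijective l ⟨hinj, hsurj⟩
    have hls : ∀ x, l (e.symm x) = x := fun x => e.apply_symm_apply x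
    refine ⟨⟨⟨ConcreteCategory.ofHom (e.symm : V →ₗ[ℂ] ↥Y.V.obj), ?_⟩, ?_, ?_⟩⟩
    · intro g
      ext v
      apply hinj
      show l (e.symm ((ρ g) v)) = l (Y.ρ g (e.symm v))
      rw [hls]
      exact ((hcomm g (e.symm v)).trans (by rw [hls])).symm
    · ext y
      show e.symm (l y) = y
      exact e.symm_apply_apply y
    · ext v
      show l (e.symm v) = v
      exact hls v

abbrev MA (G : Type) [Group G] [Fintype G] := MonoidAlgebra ℂ G

instance : FiniteDimensional ℂ (MA G) :=
  Module.Finite.equiv ((Finsupp.linearEquivFunOnFinite ℂ ℂ G).symm.trans (MonoidAlgebra.coeffLinearEquiv (R := ℂ)).symm)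

instance (S : Submodule (MA G) (MA G)) : FiniteDimensional ℂ ↥S :=
  FiniteDimensional.of_injective ((S.subtype).restrictScalars ℂ) Subtype.val_injective

def rhoS (S : Submodule (MA G) (MA G)) : Representation ℂ G ↥S where
  toFun g := {
    toFun := fun x => ⟨MonoidAlgebra.single g 1 * x.1, S.smul_mem _ x.2⟩
    map_add' := by intro x y; ext; simp [mul_add]
    map_smul' := by intro c x; ext; simp [Algebra.mul_smul_comm] }
  map_one' := by ext x; simp
  map_mul' := by intro g h; ext x; simp [MonoidAlgebra.single_mul_single, mul_assoc]

theorem rhoS_single_smul (S : Submodule (MA G) (MA G)) (g : G) (c : ℂ) (x : ↥S) :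
    (MonoidAlgebra.single g c : MA G) • x = c • (rhoS S g x) := by
  apply Subtype.ext
  show (MonoidAlgebra.single g c : MA G) * x.1 = c • ((MonoidAlgebra.single g 1 : MA G) * x.1)
  rw [← smul_mul_assoc, MonoidAlgebra.smul_single', mul_one]

theorem invariant_bot_or_top (S : Submodule (MA G) (MA G)) (hS : IsSimpleModule (MA G) ↥S)
    (N : Submodule ℂ ↥S) (hN : ∀ g x, x ∈ N → rhoS S g x ∈ N) : N = ⊥ ∨ N = ⊤ := by
  haveI := hS
  let N' : Submodule (MA G) ↥S :=
    { carrier := N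
      add_mem' := fun ha hb => N.add_mem ha hb
      zero_mem' := N.zero_mem
      smul_mem' := by
        intro a x hx
        induction a using MonoidAlgebra.induction_linear with
        | zero => simp
        | add a b ha hb => rw [add_smul]; exact N.add_mem ha hb
        | single g c =>
          show (MonoidAlgebra.single g c : MA G) • x ∈ N
          rw [rhoS_single_smul]
          exact N.smul_mem c (hN g x hx) }
  rcases eq_bot_or_eq_top N' with h | h
  · left
    ext y
    simp only [Submodule.mem_bot]
    constructor
    · intro hy
      have : y ∈ N' := hy
      rw [h] at this
      simpa using this
    · intro hy; rw [hy]; exact N.zero_mem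
  · right
    ext y
    simp only [Submodule.mem_top, iff_true]
    have : y ∈ N' := by rw [h]; trivial
    exact this

theorem engine (f : G → ℂ) (hcl : ∀ g h : G, f (h * g * h⁻¹) = f g)
    (horth : ∀ χ : {χ : G → ℂ // IsIrredChar G χ}, ∑ g : G, f g * χ.1 g = 0)
    (hsimple : ∀ (S : Submodule (MA G) (MA G)), IsSimpleModule (MA G) ↥S →
      Simple (FDRep.of (rhoS S))) :
    ∀ g : G, f g = 0 := by
  set z : MA G := ∑ g : G, MonoidAlgebra.single g (f g) with hz
  have hcomm : ∀ a : MA G, z * a = a * z := by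
    intro a
    induction a using MonoidAlgebra.induction_linear with
    | zero => simp
    | add a b ha hb => rw [mul_add, add_mul, ha, hb]
    | single h c =>
      show z * MonoidAlgebra.single h c = MonoidAlgebra.single h c * z
      rw [hz, Finset.sum_mul, Finset.mul_sum]
      simp only [MonoidAlgebra.single_mul_single, mul_one, one_mul]
      apply Fintype.sum_bijective (fun t => h⁻¹ * t * h)
        ((Equiv.mulLeft h⁻¹).trans (Equiv.mulRight h)).bijective
      intro t
      have hf : f (h⁻¹ * t * h) = f t := by
        have := hcl t h⁻¹; rwa [inv_inv] at this
      show MonoidAlgebra.single (t * h) (f t * c) =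
        MonoidAlgebra.single (h * (h⁻¹ * t * h)) (c * f (h⁻¹ * t * h))
      rw [hf, show h * (h⁻¹ * t * h) = t * h by group, mul_comm c (f t)]
  -- z kills every simple submodule
  have hker : ∀ S : Submodule (MA G) (MA G), IsSimpleModule (MA G) ↥S →
      ∀ x ∈ S, z * x = 0 := by
    intro S hS x hx
    haveI := hS
    haveI : Nontrivial ↥S := IsSimpleModule.nontrivial (MA G) ↥S
    let e : Module.End ℂ ↥S :=
      { toFun := fun x => ⟨z * x.1, S.smul_mem z x.2⟩
        map_add' := by intro x y; ext; simp [mul_add]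
        map_smul' := by intro c x; ext; simp [Algebra.mul_smul_comm] }
    have he_comm : ∀ (g : G) (x : ↥S), e (rhoS S g x) = rhoS S g (e x) := by
      intro g x
      apply Subtype.ext
      show z * (MonoidAlgebra.single g 1 * x.1) = MonoidAlgebra.single g 1 * (z * x.1)
      rw [← mul_assoc, hcomm (MonoidAlgebra.single g 1), mul_assoc]
    obtain ⟨c, hc⟩ := Module.End.exists_eigenvalue e
    have hinv : ∀ g x, x ∈ Module.End.eigenspace e c → rhoS S g x ∈ Module.End.eigenspace e c := by
      intro g x hx
      rw [Module.End.mem_eigenspace_iff] at hx ⊢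
      rw [he_comm, hx, map_smul]
    have htop : Module.End.eigenspace e c = ⊤ := by
      rcases invariant_bot_or_top S hS (Module.End.eigenspace e c) hinv with h | h
      · exact absurd h hc
      · exact h
    have he : ∀ x : ↥S, e x = c • x := by
      intro x
      have : x ∈ Module.End.eigenspace e c := by rw [htop]; trivial
      exact Module.End.mem_eigenspace_iff.mp this
    -- trace computation
    have h1 : LinearMap.trace ℂ ↥S e = c * (Module.finrank ℂ ↥S) := by
      have : e = c • LinearMap.id := by ext x; simp [he]
      rw [this, map_smul, LinearMap.trace_id, smul_eq_mul]
    have h2 : e = ∑ g : G, f g • (rhoS S g : Module.End ℂ ↥S) := by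
      apply LinearMap.ext
      intro x
      show e x = _
      rw [LinearMap.sum_apply]
      apply Subtype.ext
      show z * x.1 = _
      rw [AddSubmonoidClass.coe_finset_sum, hz, Finset.sum_mul]
      apply Finset.sum_congr rfl
      intro g _
      show MonoidAlgebra.single g (f g) * x.1 = ((f g • (rhoS S g x)) : ↥S).1
      rw [← rhoS_single_smul]
      rfl
    have h3 : LinearMap.trace ℂ ↥S e = ∑ g : G, f g * (FDRep.of (rhoS S)).character g := by
      rw [h2, map_sum]
      apply Finset.sum_congr rfl
      intro g _
      rw [map_smul, smul_eq_mul]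
      rfl
    have hX : IsIrredChar G (FDRep.of (rhoS S)).character := ⟨_, hsimple S hS, rfl⟩
    have h4 := horth ⟨_, hX⟩
    have hc0 : c = 0 := by
      have := h1.symm.trans h3
      rw [h4] at this
      have hfin : (Module.finrank ℂ ↥S : ℂ) ≠ 0 := by
        exact_mod_cast (Module.finrank_pos (R := ℂ) (M := ↥S)).ne'
      rcases mul_eq_zero.mp this with h | h
      · exact h
      · exact absurd h hfin
    have := he ⟨x, hx⟩
    rw [hc0, zero_smul] at this
    exact congrArg Subtype.val this
  -- conclude z = 0
  have hz0 : z = 0 := by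
    let μ : MA G →ₗ[MA G] MA G :=
      { toFun := fun x => z * x
        map_add' := fun a b => mul_add z a b
        map_smul' := by
          intro a x
          simp only [smul_eq_mul, RingHom.id_apply]
          rw [← mul_assoc, hcomm a, mul_assoc]  }
    have hle : ⊤ ≤ LinearMap.ker μ := by
      rw [← IsSemisimpleModule.sSup_simples_eq_top (MA G) (MA G)]
      apply sSup_le
      intro S hSm
      intro x hx
      exact hker S hSm x hx
    have h5 := LinearMap.mem_ker.mp (hle (trivial : (1 : MA G) ∈ ⊤))
    have h6 : z * 1 = 0 := h5
    rwa [mul_one] at h6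
  intro g
  have := congrArg (fun w : MA G => w.coeff g) hz0
  simp only [hz, MonoidAlgebra.coeff_sum, MonoidAlgebra.coeff_single] at this
  rw [Finset.sum_apply'] at this
  simp only [Finsupp.single_apply] at this
  rw [Finset.sum_ite_eq' Finset.univ g f] at this
  simpa using this

theorem simple_rhoS (S : Submodule (MA G) (MA G)) (hS : IsSimpleModule (MA G) ↥S) :
    Simple (FDRep.of (rhoS S)) := by
  haveI := hS
  haveI : Nontrivial ↥S := IsSimpleModule.nontrivial (MA G) ↥S
  exact simple_of_invariant (rhoS S) (invariant_bot_or_top S hS)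

theorem engine' (f : G → ℂ) (hcl : ∀ g h : G, f (h * g * h⁻¹) = f g)
    (horth : ∀ χ : {χ : G → ℂ // IsIrredChar G χ}, ∑ g : G, f g * χ.1 g = 0) :
    ∀ g : G, f g = 0 :=
  engine f hcl horth (fun S hS => simple_rhoS S hS)

theorem char_isConj {χ : {χ : G → ℂ // IsIrredChar G χ}} {g h : G} (hc : IsConj g h) :
    χ.1 g = χ.1 h := by
  obtain ⟨c, hc⟩ := isConj_iff.mp hc
  rw [← hc, char_classfun]

def vChar (χ : {χ : G → ℂ // IsIrredChar G χ}) : ConjClasses G → ℂ :=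
  fun K => χ.1 K.out

theorem vChar_mk (χ : {χ : G → ℂ // IsIrredChar G χ}) (g : G) :
    vChar χ (ConjClasses.mk g) = χ.1 g := by
  apply char_isConj
  rw [← ConjClasses.mk_eq_mk_iff_isConj, ← ConjClasses.quotient_mk_eq_mk]
  exact Quotient.out_eq _

theorem vChar_mem_carrier (χ : {χ : G → ℂ // IsIrredChar G χ}) {K : ConjClasses G} {x : G}
    (hx : x ∈ K.carrier) : vChar χ K = χ.1 x := by
  rw [← ConjClasses.mem_carrier_iff_mk_eq.mp hx, vChar_mk]

theorem vChar_indep : LinearIndependent ℂ (vChar (G := G)) := by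
  rw [linearIndependent_iff]
  intro l hl
  ext ψ
  by_cases hψ : ψ ∈ l.support
  case neg => simpa using Finsupp.notMem_support_iff.mp hψ
  have h0 : ∀ g : G, (∑ χ ∈ l.support, l χ * χ.1 g) = 0 := by
    intro g
    have h1 := congrFun hl (ConjClasses.mk g)
    rw [Finsupp.linearCombination_apply, Finsupp.sum] at h1
    simpa [vChar_mk] using h1
  have h2 : ∑ g : G, (∑ χ ∈ l.support, l χ * χ.1 g) * ψ.1 g⁻¹ = 0 := by
    simp [h0]
  show l ψ = 0
  have h3 : ∑ χ ∈ l.support, l χ * (if χ = ψ then (Fintype.card G : ℂ) else 0) = 0 := by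
    calc ∑ χ ∈ l.support, l χ * (if χ = ψ then (Fintype.card G : ℂ) else 0)
        = ∑ χ ∈ l.support, l χ * ∑ g : G, χ.1 g * ψ.1 g⁻¹ := by simp [char_orth]
      _ = ∑ χ ∈ l.support, ∑ g : G, l χ * (χ.1 g * ψ.1 g⁻¹) := by simp [Finset.mul_sum]
      _ = ∑ g : G, ∑ χ ∈ l.support, l χ * (χ.1 g * ψ.1 g⁻¹) := Finset.sum_comm
      _ = ∑ g : G, (∑ χ ∈ l.support, l χ * χ.1 g) * ψ.1 g⁻¹ := by
          apply Finset.sum_congr rfl; intro g _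
          rw [Finset.sum_mul]
          apply Finset.sum_congr rfl; intro χ _
          ring
      _ = 0 := h2
  rw [show (fun χ : {χ : G → ℂ // IsIrredChar G χ} =>
      l χ * (if χ = ψ then (Fintype.card G : ℂ) else 0)) =
      (fun χ => if χ = ψ then l χ * (Fintype.card G : ℂ) else 0) from by
        funext χ; split <;> simp] at h3
  rw [Finset.sum_ite_eq' l.support ψ (fun χ => l χ * (Fintype.card G : ℂ)), if_pos hψ] at h3
  rcases mul_eq_zero.mp h3 with h | h
  · exact h
  · exact absurd h (Nat.cast_ne_zero.mpr Fintype.card_ne_zero)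

theorem irr_finite : Finite {χ : G → ℂ // IsIrredChar G χ} := by
  haveI : Fintype (ConjClasses G) := Fintype.ofFinite _
  exact vChar_indep.finite

theorem vChar_span (φ : ConjClasses G → ℂ) :
    φ ∈ Submodule.span ℂ (Set.range (vChar (G := G))) := by
  haveI := irr_finite (G := G)
  haveI : Fintype {χ : G → ℂ // IsIrredChar G χ} := Fintype.ofFinite _
  set d : {χ : G → ℂ // IsIrredChar G χ} → ℂ :=
    fun ψ => (Fintype.card G : ℂ)⁻¹ * ∑ g : G, φ (ConjClasses.mk g) * ψ.1 g⁻¹ with hd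
  set F : G → ℂ := fun g => φ (ConjClasses.mk g) - ∑ ψ, d ψ * ψ.1 g with hF
  have hcard : (Fintype.card G : ℂ) ≠ 0 := Nat.cast_ne_zero.mpr Fintype.card_ne_zero
  have hFconj : ∀ g h : G, F (h * g * h⁻¹) = F g := by
    intro g h
    have : ConjClasses.mk (h * g * h⁻¹) = ConjClasses.mk g := by
      rw [ConjClasses.mk_eq_mk_iff_isConj]
      exact isConj_iff.mpr ⟨h⁻¹, by group⟩
    simp only [hF, this, char_classfun]
  have hForth : ∀ χ : {χ : G → ℂ // IsIrredChar G χ}, ∑ g : G, F g * χ.1 g⁻¹ = 0 := by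
    intro χ
    have expand : ∑ g : G, F g * χ.1 g⁻¹ =
        (∑ g : G, φ (ConjClasses.mk g) * χ.1 g⁻¹) -
          ∑ ψ, d ψ * ∑ g : G, ψ.1 g * χ.1 g⁻¹ := by
      rw [hF]
      simp only [sub_mul, Finset.sum_sub_distrib]
      congr 1
      calc ∑ x : G, (∑ ψ, d ψ * ψ.1 x) * χ.1 x⁻¹
          = ∑ x : G, ∑ ψ, d ψ * ψ.1 x * χ.1 x⁻¹ := by simp [Finset.sum_mul]
        _ = ∑ ψ, ∑ x : G, d ψ * ψ.1 x * χ.1 x⁻¹ := Finset.sum_comm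
        _ = ∑ ψ, d ψ * ∑ g : G, ψ.1 g * χ.1 g⁻¹ := by
            apply Finset.sum_congr rfl; intro ψ _
            rw [Finset.mul_sum]
            apply Finset.sum_congr rfl; intro x _
            ring
    rw [expand]
    have : ∑ ψ, d ψ * ∑ g : G, ψ.1 g * χ.1 g⁻¹ = d χ * (Fintype.card G : ℂ) := by
      rw [show (fun ψ : {χ : G → ℂ // IsIrredChar G χ} =>
          d ψ * ∑ g : G, ψ.1 g * χ.1 g⁻¹) =
          (fun ψ => if ψ = χ then d ψ * (Fintype.card G : ℂ) else 0) from by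
            funext ψ; rw [char_orth]; split <;> simp]
      rw [Finset.sum_ite_eq' Finset.univ χ (fun ψ => d ψ * (Fintype.card G : ℂ))]
      simp
    rw [this, hd]
    field_simp
    simp
  -- apply the engine to g ↦ F g⁻¹
  have hF0 : ∀ g : G, F g = 0 := by
    intro g
    have := engine' (fun g => F g⁻¹) ?_ ?_ g⁻¹
    · simpa using this
    · intro t h
      show F ((h * t * h⁻¹)⁻¹) = F t⁻¹
      rw [show (h * t * h⁻¹)⁻¹ = h * t⁻¹ * h⁻¹ by group]
      exact hFconj t⁻¹ h
    · intro χ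
      show ∑ g : G, F g⁻¹ * χ.1 g = 0
      have h7 := hForth χ
      rw [← Equiv.sum_comp (Equiv.inv G) (fun g => F g * χ.1 g⁻¹)] at h7
      simpa using h7
  have hrepr : φ = ∑ ψ, d ψ • vChar ψ := by
    funext K
    obtain ⟨g, rfl⟩ := ConjClasses.exists_rep K
    have h2 : φ (ConjClasses.mk g) = ∑ ψ, d ψ * ψ.1 g := sub_eq_zero.mp (hF0 g)
    rw [show (∑ ψ, d ψ • vChar ψ) (ConjClasses.mk g) = ∑ ψ, d ψ * ψ.1 g from by
      rw [Finset.sum_apply]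
      apply Finset.sum_congr rfl; intro ψ _
      simp [vChar_mk]]
    exact h2
  rw [hrepr]
  exact Submodule.sum_mem _ fun ψ _ =>
    Submodule.smul_mem _ _ (Submodule.subset_span ⟨ψ, rfl⟩)

theorem fixed_count (A : Type*) [Group A]
    [MulAction A {χ : G → ℂ // IsIrredChar G χ}]
    [MulAction A (ConjClasses G)]
    (hcompat : ∀ (a : A) (χ : {χ : G → ℂ // IsIrredChar G χ}) (K : ConjClasses G)
      (x y : G), x ∈ K.carrier → y ∈ (a • K).carrier →
        ((a • χ : {χ : G → ℂ // IsIrredChar G χ}) : G → ℂ) y = (χ : G → ℂ) x)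
    (a : A) :
    Nat.card {χ : {χ : G → ℂ // IsIrredChar G χ} // a • χ = χ} =
      Nat.card {K : ConjClasses G // a • K = K} := by
  haveI := irr_finite (G := G)
  haveI : Fintype {χ : G → ℂ // IsIrredChar G χ} := Fintype.ofFinite _
  haveI : Fintype (ConjClasses G) := Fintype.ofFinite _
  let b : Module.Basis {χ : G → ℂ // IsIrredChar G χ} ℂ (ConjClasses G → ℂ) :=
    Module.Basis.mk vChar_indep (fun φ _ => vChar_span φ)
  let Q : (ConjClasses G → ℂ) →ₗ[ℂ] (ConjClasses G → ℂ) :=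
    { toFun := fun φ K => φ (a⁻¹ • K)
      map_add' := fun _ _ => rfl
      map_smul' := fun _ _ => rfl }
  have hQv : ∀ χ, Q (vChar χ) = vChar (a • χ) := by
    intro χ
    funext K
    obtain ⟨y, rfl⟩ := ConjClasses.exists_rep K
    obtain ⟨x, hx⟩ := ConjClasses.exists_rep (a⁻¹ • ConjClasses.mk y)
    show vChar χ (a⁻¹ • ConjClasses.mk y) = vChar (a • χ) (ConjClasses.mk y)
    rw [← hx, vChar_mk, vChar_mk]
    have h1 : x ∈ (a⁻¹ • ConjClasses.mk y).carrier :=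
      ConjClasses.mem_carrier_iff_mk_eq.mpr hx
    have h2 : y ∈ (a • (a⁻¹ • ConjClasses.mk y)).carrier := by
      rw [smul_inv_smul]
      exact ConjClasses.mem_carrier_iff_mk_eq.mpr rfl
    exact (hcompat a χ (a⁻¹ • ConjClasses.mk y) x y h1 h2).symm
  have t1 : LinearMap.trace ℂ (ConjClasses G → ℂ) Q =
      ((Finset.univ.filter (fun χ : {χ : G → ℂ // IsIrredChar G χ} => a • χ = χ)).card : ℂ) := by
    rw [LinearMap.trace_eq_matrix_trace ℂ b, Matrix.trace]
    have hdiag : ∀ χ, (LinearMap.toMatrix b b Q) χ χ = if a • χ = χ then 1 else 0 := by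
      intro χ
      rw [LinearMap.toMatrix_apply, Module.Basis.mk_apply, hQv, ← Module.Basis.mk_apply vChar_indep
        (fun φ _ => vChar_span φ), Module.Basis.repr_self]
      rw [Finsupp.single_apply]
    rw [show ∑ χ, (LinearMap.toMatrix b b Q).diag χ =
        ∑ χ : {χ : G → ℂ // IsIrredChar G χ}, if a • χ = χ then (1:ℂ) else 0 from
      Finset.sum_congr rfl fun χ _ => hdiag χ]
    rw [Finset.sum_boole]
  have t2 : LinearMap.trace ℂ (ConjClasses G → ℂ) Q =
      ((Finset.univ.filter (fun K : ConjClasses G => a • K = K)).card : ℂ) := by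
    rw [LinearMap.trace_eq_matrix_trace ℂ (Pi.basisFun ℂ (ConjClasses G)), Matrix.trace]
    have hdiag : ∀ K, (LinearMap.toMatrix (Pi.basisFun ℂ (ConjClasses G))
        (Pi.basisFun ℂ (ConjClasses G)) Q).diag K = if a • K = K then 1 else 0 := by
      intro K
      show (LinearMap.toMatrix _ _ Q) K K = _
      rw [LinearMap.toMatrix_apply, Pi.basisFun_repr]
      show (Pi.basisFun ℂ (ConjClasses G) K) (a⁻¹ • K) = _
      rw [Pi.basisFun_apply]
      have hiff : (a⁻¹ • K = K) ↔ (a • K = K) := by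
        constructor
        · intro h; conv_lhs => rw [← h]
          rw [smul_inv_smul]
        · intro h; conv_lhs => rw [← h]
          rw [inv_smul_smul]
      by_cases h : a • K = K
      · rw [if_pos h, Pi.single_apply, if_pos (hiff.mpr h)]
      · rw [if_neg h, Pi.single_apply, if_neg (fun hh => h (hiff.mp hh))]
    rw [show ∑ K, (LinearMap.toMatrix (Pi.basisFun ℂ (ConjClasses G))
        (Pi.basisFun ℂ (ConjClasses G)) Q).diag K =
        ∑ K : ConjClasses G, if a • K = K then (1:ℂ) else 0 from
      Finset.sum_congr rfl fun K _ => hdiag K]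
    rw [Finset.sum_boole]
  have hcc : ((Finset.univ.filter (fun χ : {χ : G → ℂ // IsIrredChar G χ} => a • χ = χ)).card : ℂ)
      = ((Finset.univ.filter (fun K : ConjClasses G => a • K = K)).card : ℂ) := t1.symm.trans t2
  have hnat : (Finset.univ.filter (fun χ : {χ : G → ℂ // IsIrredChar G χ} => a • χ = χ)).card
      = (Finset.univ.filter (fun K : ConjClasses G => a • K = K)).card :=
    Nat.cast_injective hcc
  rw [Nat.card_eq_fintype_card, Nat.card_eq_fintype_card, Fintype.card_subtype,
    Fintype.card_subtype]
  exact hnat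

theorem orbit_count (A : Type*) [Group A]
    [MulAction A {χ : G → ℂ // IsIrredChar G χ}]
    [MulAction A (ConjClasses G)]
    (hcompat : ∀ (a : A) (χ : {χ : G → ℂ // IsIrredChar G χ}) (K : ConjClasses G)
      (x y : G), x ∈ K.carrier → y ∈ (a • K).carrier →
        ((a • χ : {χ : G → ℂ // IsIrredChar G χ}) : G → ℂ) y = (χ : G → ℂ) x) :
    Nat.card (MulAction.orbitRel.Quotient A {χ : G → ℂ // IsIrredChar G χ}) =
      Nat.card (MulAction.orbitRel.Quotient A (ConjClasses G)) := by
  haveI := irr_finite (G := G)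
  haveI : Fintype {χ : G → ℂ // IsIrredChar G χ} := Fintype.ofFinite _
  haveI : Fintype (ConjClasses G) := Fintype.ofFinite _
  let Φ : A →* Equiv.Perm {χ : G → ℂ // IsIrredChar G χ} × Equiv.Perm (ConjClasses G) :=
    (MulAction.toPermHom A {χ : G → ℂ // IsIrredChar G χ}).prod
      (MulAction.toPermHom A (ConjClasses G))
  let B := Φ.range
  haveI : Fintype B := Fintype.ofFinite _
  letI actI : MulAction B {χ : G → ℂ // IsIrredChar G χ} :=
    MulAction.compHom _ ((MonoidHom.fst _ _).comp B.subtype)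
  letI actC : MulAction B (ConjClasses G) :=
    MulAction.compHom _ ((MonoidHom.snd _ _).comp B.subtype)
  have eI : MulAction.orbitRel.Quotient A {χ : G → ℂ // IsIrredChar G χ} ≃
      MulAction.orbitRel.Quotient B {χ : G → ℂ // IsIrredChar G χ} := by
    apply Quotient.congrRight
    intro x y
    rw [MulAction.orbitRel_apply, MulAction.orbitRel_apply,
      MulAction.mem_orbit_iff, MulAction.mem_orbit_iff]
    constructor
    · rintro ⟨a, ha⟩
      exact ⟨⟨Φ a, ⟨a, rfl⟩⟩, ha⟩
    · rintro ⟨⟨ba, a, rfl⟩, ha⟩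
      exact ⟨a, ha⟩
  have eC : MulAction.orbitRel.Quotient A (ConjClasses G) ≃
      MulAction.orbitRel.Quotient B (ConjClasses G) := by
    apply Quotient.congrRight
    intro x y
    rw [MulAction.orbitRel_apply, MulAction.orbitRel_apply,
      MulAction.mem_orbit_iff, MulAction.mem_orbit_iff]
    constructor
    · rintro ⟨a, ha⟩
      exact ⟨⟨Φ a, ⟨a, rfl⟩⟩, ha⟩
    · rintro ⟨⟨ba, a, rfl⟩, ha⟩
      exact ⟨a, ha⟩
  haveI : ∀ b : B, Fintype (MulAction.fixedBy {χ : G → ℂ // IsIrredChar G χ} b) :=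
    fun _ => Fintype.ofFinite _
  haveI : ∀ b : B, Fintype (MulAction.fixedBy (ConjClasses G) b) := fun _ => Fintype.ofFinite _
  haveI : Fintype (MulAction.orbitRel.Quotient B {χ : G → ℂ // IsIrredChar G χ}) :=
    Fintype.ofFinite _
  haveI : Fintype (MulAction.orbitRel.Quotient B (ConjClasses G)) := Fintype.ofFinite _
  have burn1 := MulAction.sum_card_fixedBy_eq_card_orbits_mul_card_group B
    {χ : G → ℂ // IsIrredChar G χ}
  have burn2 := MulAction.sum_card_fixedBy_eq_card_orbits_mul_card_group B (ConjClasses G)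
  have hsum : ∑ b : B, Fintype.card (MulAction.fixedBy {χ : G → ℂ // IsIrredChar G χ} b) =
      ∑ b : B, Fintype.card (MulAction.fixedBy (ConjClasses G) b) := by
    apply Finset.sum_congr rfl
    rintro ⟨bb, a, rfl⟩ _
    have c1 : Fintype.card (MulAction.fixedBy {χ : G → ℂ // IsIrredChar G χ}
        (⟨Φ a, ⟨a, rfl⟩⟩ : B)) = Nat.card {χ : {χ : G → ℂ // IsIrredChar G χ} // a • χ = χ} := by
      rw [Nat.card_eq_fintype_card]
      apply Fintype.card_congr
      apply Equiv.subtypeEquivRight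
      intro x
      rw [MulAction.mem_fixedBy]
      exact ⟨fun h => h, fun h => h⟩
    have c2 : Fintype.card (MulAction.fixedBy (ConjClasses G) (⟨Φ a, ⟨a, rfl⟩⟩ : B)) =
        Nat.card {K : ConjClasses G // a • K = K} := by
      rw [Nat.card_eq_fintype_card]
      apply Fintype.card_congr
      apply Equiv.subtypeEquivRight
      intro x
      rw [MulAction.mem_fixedBy]
      exact ⟨fun h => h, fun h => h⟩
    rw [c1, c2, fixed_count A hcompat a]
  have hB : 0 < Fintype.card B := Fintype.card_pos
  have key : Fintype.card (MulAction.orbitRel.Quotient B {χ : G → ℂ // IsIrredChar G χ}) =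
      Fintype.card (MulAction.orbitRel.Quotient B (ConjClasses G)) := by
    have := burn1.symm.trans (hsum.trans burn2)
    exact Nat.eq_of_mul_eq_mul_right hB this
  calc Nat.card (MulAction.orbitRel.Quotient A {χ : G → ℂ // IsIrredChar G χ})
      = Fintype.card (MulAction.orbitRel.Quotient B {χ : G → ℂ // IsIrredChar G χ}) := by
        rw [Nat.card_congr eI, Nat.card_eq_fintype_card]
    _ = Fintype.card (MulAction.orbitRel.Quotient B (ConjClasses G)) := key
    _ = Nat.card (MulAction.orbitRel.Quotient A (ConjClasses G)) := by
        rw [Nat.card_congr eC, Nat.card_eq_fintype_card]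

end
end BrauerPerm

/-- **Brauer's permutation lemma.** Suppose a group `A` acts on the set of irreducible
complex characters of a finite group `G` and on the set of its conjugacy classes
compatibly, i.e. `(a • χ) y = χ x` whenever `x` lies in a class `K` and `y` lies in the
class `a • K`. Then (i) every `a ∈ A` fixes as many irreducible characters as conjugacy
classes, and (ii) `A` has as many orbits on the irreducible characters as on the
conjugacy classes. -/
theorem brauer_permutation_lemma {G : Type} [Group G] [Fintype G]
    (A : Type*) [Group A]
    [MulAction A {χ : G → ℂ // IsIrredChar G χ}]
    [MulAction A (ConjClasses G)]
    (hcompat : ∀ (a : A) (χ : {χ : G → ℂ // IsIrredChar G χ}) (K : ConjClasses G)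
      (x y : G), x ∈ K.carrier → y ∈ (a • K).carrier →
        ((a • χ : {χ : G → ℂ // IsIrredChar G χ}) : G → ℂ) y = (χ : G → ℂ) x) :
    (∀ a : A,
      Nat.card {χ : {χ : G → ℂ // IsIrredChar G χ} // a • χ = χ} =
        Nat.card {K : ConjClasses G // a • K = K}) ∧
    Nat.card (MulAction.orbitRel.Quotient A {χ : G → ℂ // IsIrredChar G χ}) =
      Nat.card (MulAction.orbitRel.Quotient A (ConjClasses G)) := by
  constructor
  · intro a
    exact BrauerPerm.fixed_count A hcompat a
  · exact BrauerPerm.orbit_count A hcompat
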